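/- Let Θ : ℂ → ℂ be holomorphic with Θ(−z) = −Θ(z) and Θ(conj(z)) = conj(Θ(z)) for all z ∈ ℂ, and let K := Θ'. Let γ : [0,1] → ℂ be a continuously differentiable path satisfying γ(1−t) = −conj(γ(t)) for all t ∈ [0,1] (the contour C). Suppose F : ℂ × ℂ → ℂ is continuous and satisfies F(α,β) + (1/(2π))·∫_C K(α−β')·F(β',β) dβ' = (1/(2π))·Θ(α−β) for all α, β ∈ ℂ. Then the function G(α,β) := −conj( F(−conj(α), −conj(β)) ) satisfies the same integral equation: G(α,β) + (1/(2π))·∫_C K(α−β')·G(β',β) dβ' = (1/(2π))·Θ(α−β) for all α, β ∈ ℂ. -/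

import Mathlib

/-- Contour integral of `f` along the path `γ : [0,1] → ℂ`:
`∫_C f(β) dβ := ∫₀¹ f(γ(t)) γ'(t) dt`. -/
noncomputable def cInt (γ : ℝ → ℂ) (f : ℂ → ℂ) : ℂ :=
  ∫ t in (0:ℝ)..1, f (γ t) * deriv γ t

open Complex

private lemma deriv_even' (Θ : ℂ → ℂ) (hΘd : Differentiable ℂ Θ)
    (hΘodd : ∀ z : ℂ, Θ (-z) = -Θ z) (z : ℂ) : deriv Θ (-z) = deriv Θ z := by
  have h1 : HasDerivAt (fun w => Θ (-w)) (deriv Θ (-z) * (-1)) z :=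
    (hΘd (-z)).hasDerivAt.comp z ((hasDerivAt_id z).neg)
  have h2 : (fun w => Θ (-w)) = fun w => -Θ w := funext fun w => hΘodd w
  rw [h2] at h1
  have h3 : HasDerivAt (fun w => -Θ w) (-(deriv Θ z)) z := (hΘd z).hasDerivAt.neg
  have := h1.unique h3
  linear_combination -this

private lemma deriv_conj' (Θ : ℂ → ℂ) (hΘd : Differentiable ℂ Θ)
    (hΘconj : ∀ z : ℂ, Θ ((starRingEnd ℂ) z) = (starRingEnd ℂ) (Θ z)) (z : ℂ) :
    deriv Θ ((starRingEnd ℂ) z) = (starRingEnd ℂ) (deriv Θ z) := by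
  set c := starRingEnd ℂ
  have hh : HasDerivAt Θ (c (deriv Θ (c z))) z := by
    rw [hasDerivAt_iff_tendsto_slope]
    have hmap : Filter.Tendsto (fun w => c w) (nhdsWithin z {z}ᶜ)
        (nhdsWithin (c z) {c z}ᶜ) := by
      rw [tendsto_nhdsWithin_iff]
      constructor
      · exact (Complex.continuous_conj.tendsto z).mono_left nhdsWithin_le_nhds
      · filter_upwards [eventually_mem_nhdsWithin] with w hw
        simp only [Set.mem_compl_iff, Set.mem_singleton_iff] at hw ⊢
        exact fun h => hw (by simpa [c] using congrArg c h)
    have hsl : Filter.Tendsto (slope Θ (c z)) (nhdsWithin (c z) {c z}ᶜ)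
        (nhds (deriv Θ (c z))) :=
      hasDerivAt_iff_tendsto_slope.mp (hΘd (c z)).hasDerivAt
    have hcomp := (Complex.continuous_conj.tendsto _).comp (hsl.comp hmap)
    refine hcomp.congr fun w => ?_
    simp only [Function.comp, slope_def_field, c]
    rw [hΘconj w, hΘconj z]
    simp [← map_sub, ← map_div₀]
    show (starRingEnd ℂ) ((starRingEnd ℂ) (Θ w - Θ z) / (starRingEnd ℂ) (w - z)) = _
    simp only [map_div₀, Complex.conj_conj]
  have := hh.unique (hΘd z).hasDerivAt
  have h2 := congrArg c this
  simpa [c] using h2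

private lemma icInt_conj' (f : ℝ → ℂ) (a b : ℝ) :
    ∫ t in a..b, (starRingEnd ℂ) (f t) = (starRingEnd ℂ) (∫ t in a..b, f t) := by
  simp [intervalIntegral, ← integral_conj, map_sub]

private lemma deriv_gamma_sym' (γ : ℝ → ℂ) (hγ : ContDiff ℝ 1 γ)
    (hsym : ∀ t ∈ Set.Icc (0:ℝ) 1, γ (1 - t) = -(starRingEnd ℂ) (γ t)) {t : ℝ}
    (ht : t ∈ Set.Ioo (0:ℝ) 1) :
    deriv γ (1 - t) = (starRingEnd ℂ) (deriv γ t) := by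
  have hd := hγ.differentiable one_ne_zero
  have hin : HasDerivAt (fun s : ℝ => 1 - s) (-1) t := by
    simpa using (hasDerivAt_id t).const_sub 1
  have h1 : HasDerivAt (fun s => γ (1 - s)) ((-1 : ℝ) • deriv γ (1 - t)) t :=
    (hd (1 - t)).hasDerivAt.scomp t hin
  have h2 : HasDerivAt (fun s => -(starRingEnd ℂ) (γ s)) (-(starRingEnd ℂ) (deriv γ t)) t := by
    exact ((hd t).hasDerivAt.star).neg
  have hmem : Set.Icc (0:ℝ) 1 ∈ nhds t := Icc_mem_nhds ht.1 ht.2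
  have heq : (fun s => γ (1 - s)) =ᶠ[nhds t] fun s => -(starRingEnd ℂ) (γ s) :=
    Filter.eventuallyEq_of_mem hmem fun s hs => hsym s hs
  have hde : deriv (fun s => γ (1 - s)) t = deriv (fun s => -(starRingEnd ℂ) (γ s)) t :=
    heq.deriv_eq
  rw [h1.deriv, h2.deriv] at hde
  have : deriv γ (1 - t) = (starRingEnd ℂ) (deriv γ t) := by
    have := hde
    simp only [neg_one_smul] at this
    exact neg_injective this
  exact this

/-- the symmetry `F(−α*, −β*) = −F(α,β)*` of the kernel of the Bethe
integral equation: if `Θ` is holomorphic, odd, with real symmetry, `K = Θ'`, the contour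
satisfies `γ(1−t) = −conj(γ(t))`, and `F` solves
`F(α,β) + (1/2π)∫_C K(α−β')F(β',β)dβ' = (1/2π)Θ(α−β)`, then
`G(α,β) = −conj(F(−conj α, −conj β))` solves the same equation. -/
theorem stmt_18 (Θ : ℂ → ℂ) (hΘd : Differentiable ℂ Θ)
    (hΘodd : ∀ z : ℂ, Θ (-z) = -Θ z)
    (hΘconj : ∀ z : ℂ, Θ ((starRingEnd ℂ) z) = (starRingEnd ℂ) (Θ z))
    (K : ℂ → ℂ) (hK : K = deriv Θ)
    (γ : ℝ → ℂ) (hγ : ContDiff ℝ 1 γ)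
    (hsym : ∀ t ∈ Set.Icc (0:ℝ) 1, γ (1 - t) = -(starRingEnd ℂ) (γ t))
    (F : ℂ → ℂ → ℂ) (hFc : Continuous fun p : ℂ × ℂ => F p.1 p.2)
    (hFeq : ∀ α β : ℂ,
      F α β + (1 / (2 * (Real.pi : ℂ))) * cInt γ (fun β' => K (α - β') * F β' β)
        = (1 / (2 * (Real.pi : ℂ))) * Θ (α - β))
    (G : ℂ → ℂ → ℂ)
    (hG : ∀ α β : ℂ,
      G α β = -(starRingEnd ℂ) (F (-(starRingEnd ℂ) α) (-(starRingEnd ℂ) β))) :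
    ∀ α β : ℂ,
      G α β + (1 / (2 * (Real.pi : ℂ))) * cInt γ (fun β' => K (α - β') * G β' β)
        = (1 / (2 * (Real.pi : ℂ))) * Θ (α - β) := by
  intro α β
  set a : ℂ := -(starRingEnd ℂ) α with ha
  set b : ℂ := -(starRingEnd ℂ) β with hb
  -- pointwise integrand identity
  have key : ∀ t ∈ Set.Ioo (0:ℝ) 1,
      K (α - γ (1 - t)) * G (γ (1 - t)) β * deriv γ (1 - t)
        = -(starRingEnd ℂ) (K (a - γ t) * F (γ t) b * deriv γ t) := by
    intro t ht
    have h1 : γ (1 - t) = -(starRingEnd ℂ) (γ t) := hsym t (Set.mem_Icc_of_Ioo ht)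
    have h2 : deriv γ (1 - t) = (starRingEnd ℂ) (deriv γ t) :=
      deriv_gamma_sym' γ hγ hsym ht
    have hKs : K (α - -(starRingEnd ℂ) (γ t)) = (starRingEnd ℂ) (K (a - γ t)) := by
      have e1 : α - -(starRingEnd ℂ) (γ t) = (starRingEnd ℂ) (-(a - γ t)) := by
        simp only [ha, map_neg, map_sub, Complex.conj_conj]
        ring
      rw [e1, hK, deriv_conj' Θ hΘd hΘconj, deriv_even' Θ hΘd hΘodd]
    have hGs : G (-(starRingEnd ℂ) (γ t)) β = -(starRingEnd ℂ) (F (γ t) b) := by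
      rw [hG]
      simp [hb]
    rw [h1, h2, hKs, hGs]
    simp only [map_mul]
    ring
  -- the integral identity
  have hI : cInt γ (fun β' => K (α - β') * G β' β)
      = -(starRingEnd ℂ) (cInt γ (fun β' => K (a - β') * F β' b)) := by
    have hflip : cInt γ (fun β' => K (α - β') * G β' β)
        = ∫ t in (0:ℝ)..1, K (α - γ (1 - t)) * G (γ (1 - t)) β * deriv γ (1 - t) := by
      rw [cInt]
      have := intervalIntegral.integral_comp_sub_left (a := (0:ℝ)) (b := 1)
        (fun t => K (α - γ t) * G (γ t) β * deriv γ t) 1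
      simpa using this.symm
    have hne : ∀ᵐ t : ℝ, t ≠ (1:ℝ) := by
      have hset : {t : ℝ | ¬ t ≠ 1} = {1} := by ext t; simp
      rw [MeasureTheory.ae_iff, hset]
      exact Real.volume_singleton
    have hcong : (∫ t in (0:ℝ)..1,
          K (α - γ (1 - t)) * G (γ (1 - t)) β * deriv γ (1 - t))
        = ∫ t in (0:ℝ)..1, -(starRingEnd ℂ) (K (a - γ t) * F (γ t) b * deriv γ t) := by
      apply intervalIntegral.integral_congr_ae
      filter_upwards [hne] with t htne hmem
      rw [Set.uIoc_of_le (by norm_num : (0:ℝ) ≤ 1)] at hmem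
      exact key t ⟨hmem.1, lt_of_le_of_ne hmem.2 htne⟩
    rw [hflip, hcong, intervalIntegral.integral_neg, icInt_conj' (fun t => K (a - γ t) * F (γ t) b * deriv γ t)]
    rfl
  have hΘab : Θ (a - b) = -(starRingEnd ℂ) (Θ (α - β)) := by
    have e : a - b = -((starRingEnd ℂ) (α - β)) := by
      simp only [ha, hb, map_sub]; ring
    rw [e, hΘodd, hΘconj]
  have h := hFeq a b
  rw [hΘab] at h
  have h3 := congrArg (starRingEnd ℂ) h
  simp only [map_add, map_mul, map_neg, map_div₀, map_one, map_ofNat,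
    Complex.conj_ofReal, Complex.conj_conj] at h3
  rw [hG α β, hI]
  linear_combination -h3
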